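/- Let A and B be finite nonempty subsets of an abelian group G with |A+B| < 2|B| and |B| < (3/4)|A|. Then A+B lies in a single coset of some subgroup H of G with |H| < 2|B|. -/

import Mathlib

open Pointwise

theorem sumset_in_coset_small_B {G : Type*} [AddCommGroup G] [DecidableEq G]
    (A B : Finset G) (hA : A.Nonempty) (hB : B.Nonempty)
    (h1 : (A + B).card < 2 * B.card)
    (h2 : 4 * B.card < 3 * A.card) :
    ∃ (H : AddSubgroup G) (x : G), (H : Set G).Finite ∧ Nat.card H < 2 * B.card ∧
      ∀ z ∈ A + B, z - x ∈ H := by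
  classical
  obtain ⟨a₀, ha₀⟩ := hA
  obtain ⟨b₀, hb₀⟩ := hB
  set D : Finset G := B - B with hD
  -- cards of translation images
  have himg : ∀ (S : Finset G) (t : G), (S.image (· + t)).card = S.card := by
    intro S t
    exact Finset.card_image_of_injective _ (add_left_injective t)
  have hmemimg : ∀ (S : Finset G) (t x : G), x ∈ S.image (· + t) ↔ x - t ∈ S := by
    intro S t x
    simp only [Finset.mem_image]
    constructor
    · rintro ⟨y, hy, rfl⟩; simpa using hy
    · intro hx; exact ⟨x - t, hx, by abel⟩
  -- translates of A by elements of B sit inside A + B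
  have hAsub : ∀ b ∈ B, A.image (· + b) ⊆ A + B := by
    intro b hb x hx
    rw [hmemimg] at hx
    have : (x - b) + b ∈ A + B := Finset.add_mem_add hx hb
    simpa using this
  -- translates of B by elements of A sit inside A + B
  have hBsub : ∀ a ∈ A, B.image (· + a) ⊆ A + B := by
    intro a ha x hx
    rw [hmemimg] at hx
    have : a + (x - a) ∈ A + B := Finset.add_mem_add ha hx
    simpa using this
  -- Key1 : for b b' ∈ B, |A ∩ (A + (b - b'))| ≥ 2|A| - |A+B|
  have key1 : ∀ b ∈ B, ∀ b' ∈ B,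
      2 * A.card ≤ (A + B).card + (A ∩ A.image (· + (b - b'))).card := by
    intro b hb b' hb'
    have hinter : (A ∩ A.image (· + (b - b'))).card
        = (A.image (· + b') ∩ A.image (· + b)).card := by
      have h1' : ((A ∩ A.image (· + (b - b'))).image (· + b')).card
          = (A ∩ A.image (· + (b - b'))).card := himg _ _
      rw [← h1']
      congr 1
      rw [Finset.image_inter _ _ (add_left_injective b')]
      congr 1
      rw [Finset.image_image]
      congr 1
      funext a
      simp only [Function.comp_apply]
      abel
    have hunion : A.image (· + b') ∪ A.image (· + b) ⊆ A + B :=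
      Finset.union_subset (hAsub b' hb') (hAsub b hb)
    have hcu : (A.image (· + b') ∪ A.image (· + b)).card ≤ (A + B).card :=
      Finset.card_le_card hunion
    have := Finset.card_union_add_card_inter (A.image (· + b')) (A.image (· + b))
    rw [himg, himg] at this
    omega
  -- Key0 : A - A ⊆ B - B
  have key0 : ∀ a ∈ A, ∀ a' ∈ A, a - a' ∈ D := by
    intro a ha a' ha'
    have hunion : B.image (· + a) ∪ B.image (· + a') ⊆ A + B :=
      Finset.union_subset (hBsub a ha) (hBsub a' ha')
    have hcu : (B.image (· + a) ∪ B.image (· + a')).card ≤ (A + B).card :=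
      Finset.card_le_card hunion
    have hci := Finset.card_union_add_card_inter (B.image (· + a)) (B.image (· + a'))
    rw [himg, himg] at hci
    have hpos : 0 < (B.image (· + a) ∩ B.image (· + a')).card := by omega
    obtain ⟨u, hu⟩ := Finset.card_pos.mp hpos
    rw [Finset.mem_inter, hmemimg, hmemimg] at hu
    rw [hD, Finset.mem_sub]
    refine ⟨u - a', hu.2, u - a, hu.1, by abel⟩
  -- arithmetic helper : 2*(A+B).card + 3 ≤ 3*A.card
  have hs3 : 2 * (A + B).card + 3 ≤ 3 * A.card := by omega
  -- closure of D under addition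
  have hclosed : ∀ x ∈ D, ∀ y ∈ D, x + y ∈ D := by
    intro x hx y hy
    rw [hD, Finset.mem_sub] at hx hy
    obtain ⟨b1, hb1, b2, hb2, hx⟩ := hx
    obtain ⟨c1, hc1, c2, hc2, hy⟩ := hy
    -- X = {a ∈ A : a - x ∈ A}, Y = {a ∈ A : a + y ∈ A}
    set X : Finset G := A ∩ A.image (· + x) with hX
    set Y : Finset G := A ∩ A.image (· + (c2 - c1)) with hY
    have hXc : 2 * A.card ≤ (A + B).card + X.card := by
      rw [hX, ← hx]; exact key1 b1 hb1 b2 hb2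
    have hYc : 2 * A.card ≤ (A + B).card + Y.card := by
      rw [hY]; exact key1 c2 hc2 c1 hc1
    have hXA : X ⊆ A := Finset.inter_subset_left
    have hYA : Y ⊆ A := Finset.inter_subset_left
    have hu : (X ∪ Y).card ≤ A.card :=
      Finset.card_le_card (Finset.union_subset hXA hYA)
    have hci := Finset.card_union_add_card_inter X Y
    have hpos : 0 < (X ∩ Y).card := by omega
    obtain ⟨a, ha⟩ := Finset.card_pos.mp hpos
    rw [Finset.mem_inter, hX, hY, Finset.mem_inter, Finset.mem_inter,
      hmemimg, hmemimg] at ha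
    obtain ⟨⟨haA, hax⟩, -, hay⟩ := ha
    -- a - x ∈ A and a - (c2 - c1) = a + y ∈ A  (since y = c1 - c2)
    have hay' : a + y ∈ A := by
      have : a - (c2 - c1) = a + y := by rw [← hy]; abel
      rwa [this] at hay
    have := key0 (a + y) hay' (a - x) hax
    have heq : (a + y) - (a - x) = x + y := by abel
    rwa [heq] at this
  -- D is < 2 |B| in size
  have hDcard : D.card < 2 * B.card := by
    by_cases hgood : ∃ z ∈ A + B, ∀ d ∈ D, z + d ∈ A + B
    · obtain ⟨z, hz, hgz⟩ := hgood
      have : D.image (z + ·) ⊆ A + B := by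
        intro w hw
        rw [Finset.mem_image] at hw
        obtain ⟨d, hd, rfl⟩ := hw
        exact hgz d hd
      have h' : (D.image (z + ·)).card = D.card :=
        Finset.card_image_of_injective _ (add_right_injective z)
      have := Finset.card_le_card this
      omega
    · exfalso
      push_neg at hgood
      -- representation function
      set r : G → ℕ := fun z => ((A ×ˢ B).filter fun p => p.1 + p.2 = z).card with hr
      have hsum : ∑ z ∈ A + B, r z = A.card * B.card := by
        rw [← Finset.card_product]
        exact (Finset.card_eq_sum_card_fiberwise (fun p hp => by
          rw [Finset.mem_coe, Finset.mem_product] at hp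
          exact Finset.add_mem_add hp.1 hp.2)).symm
      have hbound : ∀ z ∈ A + B, r z + A.card ≤ (A + B).card := by
        intro z hz
        obtain ⟨d, hd, hzd⟩ := hgood z hz
        rw [hD, Finset.mem_sub] at hd
        obtain ⟨b, hb, b', hb', hdeq⟩ := hd
        set E : Finset G := A.image (· + (b' - b)) with hE
        -- the fiber of z injects into A \ E
        have hrz : r z ≤ (A \ E).card := by
          apply Finset.card_le_card_of_injOn (fun p => p.1)
          · intro p hp
            rw [Finset.mem_coe, Finset.mem_filter, Finset.mem_product] at hp
            obtain ⟨⟨hpA, hpB⟩, hpz⟩ := hp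
            rw [Finset.mem_coe, Finset.mem_sdiff]
            refine ⟨hpA, fun hcon => ?_⟩
            rw [hE, hmemimg] at hcon
            -- p.1 - (b' - b) ∈ A, so z + d ∈ A + B, contradiction
            have : (p.1 - (b' - b)) + p.2 ∈ A + B := Finset.add_mem_add hcon hpB
            have heq : (p.1 - (b' - b)) + p.2 = z + d := by
              rw [← hpz, ← hdeq]; abel
            rw [heq] at this
            exact hzd this
          · intro p hp q hq hpq
            rw [Finset.mem_coe, Finset.mem_filter] at hp hq
            have hpq' : p.1 = q.1 := hpq
            have : p.2 = q.2 := by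
              have h1' := hp.2
              have h2' := hq.2
              rw [← hpq'] at h2'
              exact add_left_cancel (h1'.trans h2'.symm)
            exact Prod.ext hpq' this
        have hsplit := Finset.card_sdiff_add_card_inter A E
        have hkey := key1 b' hb' b hb
        rw [← hE] at hkey
        omega
      have hle : ∑ z ∈ A + B, (r z + A.card) ≤ ∑ z ∈ A + B, (A + B).card :=
        Finset.sum_le_sum hbound
      rw [Finset.sum_add_distrib, hsum, Finset.sum_const, Finset.sum_const,
        smul_eq_mul, smul_eq_mul] at hle
      -- A.card * B.card + (A+B).card * A.card ≤ (A+B).card * (A+B).card : contradiction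
      nlinarith [hle, h1, h2, Finset.card_pos.mpr ⟨a₀, ha₀⟩,
        Finset.card_pos.mpr ⟨b₀, hb₀⟩,
        Finset.card_pos.mpr ⟨a₀ + b₀, Finset.add_mem_add ha₀ hb₀⟩]
  -- build the subgroup
  refine ⟨{ carrier := ↑D
            zero_mem' := by
              have : b₀ - b₀ ∈ D := by
                rw [hD, Finset.mem_sub]; exact ⟨b₀, hb₀, b₀, hb₀, rfl⟩
              simpa using this
            add_mem' := by
              intro x y hx hy
              exact hclosed x (Finset.mem_coe.mp hx) y (Finset.mem_coe.mp hy)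
            neg_mem' := by
              intro x hx
              rw [Finset.mem_coe, hD, Finset.mem_sub] at hx
              obtain ⟨b, hb, b', hb', rfl⟩ := hx
              rw [Finset.mem_coe, hD, Finset.mem_sub]
              exact ⟨b', hb', b, hb, by abel⟩ }, a₀ + b₀, ?_, ?_, ?_⟩
  · exact D.finite_toSet
  · have hcard : Nat.card {x // x ∈ (↑D : Set G)} = D.card := by
      rw [Nat.card_coe_set_eq, Set.ncard_coe_finset]
    calc Nat.card {x // x ∈ (↑D : Set G)} = D.card := hcard
      _ < 2 * B.card := hDcard
  · intro z hz
    rw [Finset.mem_add] at hz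
    obtain ⟨a, ha, b, hb, rfl⟩ := hz
    show (a + b) - (a₀ + b₀) ∈ (↑D : Set G)
    rw [Finset.mem_coe]
    have h1' : a - a₀ ∈ D := key0 a ha a₀ ha₀
    have h2' : b - b₀ ∈ D := by
      rw [hD, Finset.mem_sub]; exact ⟨b, hb, b₀, hb₀, rfl⟩
    have := hclosed _ h1' _ h2'
    have heq : (a - a₀) + (b - b₀) = (a + b) - (a₀ + b₀) := by abel
    rwa [heq] at this
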